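/- Let A be a d×d integer matrix, invertible over ℝ, with ‖A^{-1}‖ < 1 for the operator norm, let f = f_A : T^d → T^d be the induced map and c := 1 − ‖A^{-1}‖. For x ∈ T^d and r > 0, if p := τ(B(x,r)) is finite, then the distance from x to the set F_p := {y ∈ T^d : f^p y = y} of periodic points of period p is at most (1 + 2/c)·r. -/

import Mathlib

open MeasureTheory Filter Metric Set
open scoped NNReal ENNReal ENat Topology

noncomputable section

/-- The first return time (Poincaré recurrence) of a set `A` under a map `f`:
`τ(A) = min {k > 0 : f^k(A) ∩ A ≠ ∅}`, with value `⊤ = ∞` if no such `k` exists. -/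
def tau {X : Type*} (f : X → X) (A : Set X) : ℕ∞ :=
  ⨅ (k : ℕ) (_ : 0 < k ∧ ((f^[k]) '' A ∩ A).Nonempty), (k : ℕ∞)

/-- The integer lattice ℤ^d inside Euclidean space ℝ^d. -/
def intLattice (d : ℕ) : AddSubgroup (EuclideanSpace ℝ (Fin d)) where
  carrier := {x | ∀ i, ∃ m : ℤ, x i = (m : ℝ)}
  zero_mem' := fun i => ⟨0, by simp⟩
  add_mem' := by
    rintro a b ha hb i
    obtain ⟨m, hm⟩ := ha i
    obtain ⟨n, hn⟩ := hb i
    exact ⟨m + n, by push_cast [PiLp.add_apply, hm, hn]; ring⟩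
  neg_mem' := by
    rintro a ha i
    obtain ⟨m, hm⟩ := ha i
    exact ⟨-m, by push_cast [PiLp.neg_apply, hm]; ring⟩

instance intLattice_isClosed (d : ℕ) :
    IsClosed ((intLattice d : AddSubgroup (EuclideanSpace ℝ (Fin d))) :
      Set (EuclideanSpace ℝ (Fin d))) := by
  have h1 : ((intLattice d : AddSubgroup (EuclideanSpace ℝ (Fin d))) :
        Set (EuclideanSpace ℝ (Fin d)))
      = ⋂ i, (fun x : EuclideanSpace ℝ (Fin d) => x i) ⁻¹' (Set.range ((↑) : ℤ → ℝ)) := by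
    ext x
    simp [intLattice, AddSubgroup.mem_carrier, eq_comm]
  rw [h1]
  refine isClosed_iInter fun i => IsClosed.preimage ?_ ?_
  · exact (EuclideanSpace.proj i : EuclideanSpace ℝ (Fin d) →L[ℝ] ℝ).continuous
  · exact Int.isClosedEmbedding_coe_real.isClosed_range

/-- The d-dimensional torus ℝ^d/ℤ^d.  As a quotient of the Euclidean space ℝ^d by the
(closed) subgroup ℤ^d it carries the quotient metric
`d(x,y) = inf_{m ∈ ℤ^d} ‖x' - y' - m‖` induced by the Euclidean norm. -/
abbrev Torus (d : ℕ) := EuclideanSpace ℝ (Fin d) ⧸ intLattice d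

/-- A real d×d matrix seen as a continuous linear map on Euclidean space ℝ^d. -/
def matCLM {d : ℕ} (A : Matrix (Fin d) (Fin d) ℝ) :
    EuclideanSpace ℝ (Fin d) →L[ℝ] EuclideanSpace ℝ (Fin d) :=
  LinearMap.toContinuousLinearMap (Matrix.toEuclideanLin A)

theorem intLattice_mapsTo {d : ℕ} (A : Matrix (Fin d) (Fin d) ℤ) :
    intLattice d ≤ (intLattice d).comap
      ((matCLM (A.map (Int.cast : ℤ → ℝ))).toLinearMap.toAddMonoidHom) := by
  intro x hx
  choose m hm using hx
  intro i
  refine ⟨∑ j, A i j * m j, ?_⟩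
  have hx' : (matCLM (A.map (Int.cast : ℤ → ℝ))) x i
      = ∑ j, (A i j : ℝ) * x j := by
    simp [matCLM, Matrix.toEuclideanLin, Matrix.mulVec, dotProduct]
  show (matCLM (A.map (Int.cast : ℤ → ℝ))) x i = _
  rw [hx']
  push_cast
  exact Finset.sum_congr rfl fun j _ => by rw [hm j]

/-- The endomorphism of the torus T^d induced by an integer matrix A, i.e. x ↦ Ax (mod ℤ^d). -/
def toralMap {d : ℕ} (A : Matrix (Fin d) (Fin d) ℤ) : Torus d → Torus d :=
  QuotientAddGroup.map (intLattice d) (intLattice d)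
    ((matCLM (A.map (Int.cast : ℤ → ℝ))).toLinearMap.toAddMonoidHom)
    (intLattice_mapsTo A)

/-- Haar (Lebesgue) probability measure on the torus T^d: the pushforward under the quotient
map of Lebesgue measure restricted to the fundamental domain [0,1)^d. -/
def torusMeasure (d : ℕ) : Measure (Torus d) :=
  Measure.map (QuotientAddGroup.mk)
    (volume.restrict {x : EuclideanSpace ℝ (Fin d) | ∀ i, x i ∈ Set.Ico (0:ℝ) 1})


section Statement5Aux

lemma matCLM_mul {d : ℕ} (M N : Matrix (Fin d) (Fin d) ℝ) (v : EuclideanSpace ℝ (Fin d)) :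
    matCLM (M * N) v = matCLM M (matCLM N v) := by
  simp [matCLM, Matrix.toEuclideanLin_apply, Matrix.mulVec_mulVec]

lemma matCLM_one {d : ℕ} (v : EuclideanSpace ℝ (Fin d)) :
    matCLM (1 : Matrix (Fin d) (Fin d) ℝ) v = v := by
  simp [matCLM, Matrix.toEuclideanLin_apply]

lemma clm_iterate_sub {E : Type*} [NormedAddCommGroup E] [NormedSpace ℝ E]
    (L : E →L[ℝ] E) (p : ℕ) (a b : E) : L^[p] (a - b) = L^[p] a - L^[p] b := by
  induction p generalizing a b with
  | zero => simp
  | succ n ih => simp only [Function.iterate_succ_apply, map_sub, ih]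

lemma toralMap_mk {d : ℕ} (A : Matrix (Fin d) (Fin d) ℤ) (v : EuclideanSpace ℝ (Fin d)) :
    toralMap A (QuotientAddGroup.mk v)
      = QuotientAddGroup.mk (matCLM (A.map (Int.cast : ℤ → ℝ)) v) := rfl

lemma toralMap_iterate_mk {d : ℕ} (A : Matrix (Fin d) (Fin d) ℤ) (p : ℕ)
    (v : EuclideanSpace ℝ (Fin d)) :
    (toralMap A)^[p] (QuotientAddGroup.mk v)
      = QuotientAddGroup.mk ((matCLM (A.map (Int.cast : ℤ → ℝ)))^[p] v) := by
  induction p generalizing v with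
  | zero => simp
  | succ n ih =>
    rw [Function.iterate_succ_apply, Function.iterate_succ_apply, toralMap_mk, ih]

end Statement5Aux

/-- For an expanding linear toral endomorphism `f_A` (A an integer matrix invertible over ℝ
with `‖A⁻¹‖ < 1`), with `c = 1 - ‖A⁻¹‖`: if the first return time `p = τ(B(x,r))` of a ball
is finite, then the distance from x to the set `F_p = {y : f_A^p y = y}` of points of period
p is at most `(1 + 2/c)·r`. -/

theorem statement5 (d : ℕ) (A : Matrix (Fin d) (Fin d) ℤ)
    (hdet : (A.map (Int.cast : ℤ → ℝ)).det ≠ 0)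
    (hnorm : ‖matCLM ((A.map (Int.cast : ℤ → ℝ))⁻¹)‖ < 1)
    (c : ℝ) (hc : c = 1 - ‖matCLM ((A.map (Int.cast : ℤ → ℝ))⁻¹)‖)
    (x : Torus d) (r : ℝ) (hr : 0 < r)
    (p : ℕ) (hp : tau (toralMap A) (ball x r) = (p : ℕ∞)) :
    Metric.infDist x {y : Torus d | (toralMap A)^[p] y = y} ≤ (1 + 2 / c) * r := by
  classical
  set B := A.map (Int.cast : ℤ → ℝ) with hB
  set L := matCLM B with hLdef
  set L' := matCLM B⁻¹ with hL'def
  have hdetu : IsUnit B.det := isUnit_iff_ne_zero.mpr hdet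
  have hL'L : ∀ v, L' (L v) = v := fun v => by
    rw [hLdef, hL'def, ← matCLM_mul, Matrix.nonsing_inv_mul B hdetu, matCLM_one]
  have hLL' : ∀ v, L (L' v) = v := fun v => by
    rw [hLdef, hL'def, ← matCLM_mul, Matrix.mul_nonsing_inv B hdetu, matCLM_one]
  have hiter : ∀ (q : ℕ) (v), L^[q] (L'^[q] v) = v := by
    intro q
    induction q with
    | zero => simp
    | succ n ih =>
      intro v
      rw [Function.iterate_succ_apply L', Function.iterate_succ_apply' L, ih, hLL']
  have hiter' : ∀ (q : ℕ) (v), L'^[q] (L^[q] v) = v := by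
    intro q
    induction q with
    | zero => simp
    | succ n ih =>
      intro v
      rw [Function.iterate_succ_apply L, Function.iterate_succ_apply' L', ih, hL'L]
  -- extract a point of the ball returning at time exactly p
  set Sset : Set ℕ :=
    {k | 0 < k ∧ (((toralMap A)^[k]) '' (ball x r) ∩ ball x r).Nonempty} with hSset
  have hpS : p ∈ Sset := by
    have hne : Sset.Nonempty := by
      by_contra h
      rw [Set.not_nonempty_iff_eq_empty] at h
      have htop : tau (toralMap A) (ball x r) = ⊤ := by
        simp only [tau, iInf_eq_top]
        intro k hk
        exact absurd (show k ∈ Sset from hk) (by simp [h])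
      rw [hp] at htop
      exact (ENat.coe_ne_top p) htop
    have hmem := Nat.sInf_mem hne
    have htau : tau (toralMap A) (ball x r) = ((sInf Sset : ℕ) : ℕ∞) := by
      unfold tau
      apply le_antisymm
      · exact iInf₂_le (sInf Sset) hmem
      · refine le_iInf₂ fun k hk => ?_
        exact_mod_cast Nat.sInf_le (show k ∈ Sset from hk)
    rw [hp] at htau
    have hps : p = sInf Sset := by exact_mod_cast htau
    rw [hps]; exact hmem
  obtain ⟨hp0, w, ⟨z, hzball, hfz⟩, hwball⟩ := hpS
  obtain ⟨zt, hz⟩ := QuotientAddGroup.mk_surjective z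
  subst hz
  -- distance between the return point and the base point
  have hdist2 : dist ((toralMap A)^[p] (QuotientAddGroup.mk zt))
      (QuotientAddGroup.mk zt : Torus d) < 2 * r := by
    have h1 : dist (QuotientAddGroup.mk zt : Torus d) x < r := mem_ball.mp hzball
    have h2 : dist ((toralMap A)^[p] (QuotientAddGroup.mk zt)) x < r := by
      rw [hfz]; exact mem_ball.mp hwball
    calc dist ((toralMap A)^[p] (QuotientAddGroup.mk zt))
          (QuotientAddGroup.mk zt : Torus d)
        ≤ dist ((toralMap A)^[p] (QuotientAddGroup.mk zt)) x
            + dist x (QuotientAddGroup.mk zt : Torus d) := dist_triangle _ _ _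
      _ < r + r := by
          rw [dist_comm x]
          exact add_lt_add h2 h1
      _ = 2 * r := by ring
  have hnormlt : ‖(QuotientAddGroup.mk (L^[p] zt - zt) : Torus d)‖ < 2 * r := by
    rw [toralMap_iterate_mk] at hdist2
    rwa [dist_eq_norm, ← QuotientAddGroup.mk_sub] at hdist2
  obtain ⟨u, hu, hulen⟩ := QuotientAddGroup.norm_lt_iff.mp hnormlt
  set m := L^[p] zt - zt - u with hm
  have hmk_m : (QuotientAddGroup.mk m : Torus d) = 0 := by
    calc (QuotientAddGroup.mk m : Torus d)
        = QuotientAddGroup.mk (L^[p] zt - zt) - QuotientAddGroup.mk u := by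
          rw [hm, QuotientAddGroup.mk_sub]
      _ = 0 := by rw [← hu, sub_self]
  -- the contraction whose fixed point is the periodic point
  set K : ℝ≥0 := ‖L'‖₊ ^ p with hK
  have hlip' : LipschitzWith K (L'^[p]) := by
    rw [hK]; exact L'.lipschitz.iterate p
  set T : EuclideanSpace ℝ (Fin d) → EuclideanSpace ℝ (Fin d) :=
    fun y => L'^[p] (y + m) with hT
  have hlipT : LipschitzWith K T := by
    have h2 : LipschitzWith 1 (fun y : EuclideanSpace ℝ (Fin d) => y + m) :=
      LipschitzWith.of_dist_le_mul fun a b => by simp [dist_add_right]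
    simpa [hT, mul_one, Function.comp_def] using hlip'.comp h2
  have hp0' : p ≠ 0 := Nat.pos_iff_ne_zero.mp hp0
  have hKlt : K < 1 := by
    have hn1 : ‖L'‖₊ < 1 := by exact_mod_cast hnorm
    exact pow_lt_one₀ zero_le hn1 hp0'
  have hcontr : ContractingWith K T := ⟨hKlt, hlipT⟩
  set y₀ := ContractingWith.fixedPoint T hcontr with hy₀
  have hfix : T y₀ = y₀ := hcontr.fixedPoint_isFixedPt
  -- the fixed point projects to a periodic point
  have h1 : L^[p] y₀ = y₀ + m := by
    conv_lhs => rw [← hfix]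
    exact hiter p (y₀ + m)
  have hper : (toralMap A)^[p] (QuotientAddGroup.mk y₀)
      = (QuotientAddGroup.mk y₀ : Torus d) := by
    rw [toralMap_iterate_mk, h1, QuotientAddGroup.mk_add, hmk_m, add_zero]
  -- distance estimates
  have hTz : T zt = zt - L'^[p] u := by
    have hzm : zt + m = L^[p] zt - u := by rw [hm]; abel
    show L'^[p] (zt + m) = zt - L'^[p] u
    rw [hzm, clm_iterate_sub, hiter']
  have hdistT : dist zt (T zt) = ‖L'^[p] u‖ := by
    rw [hTz, dist_eq_norm]
    simp
  have hLu : ‖L'^[p] u‖ ≤ (K : ℝ) * ‖u‖ := by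
    have h0 : L'^[p] (0 : EuclideanSpace ℝ (Fin d)) = 0 :=
      Function.iterate_fixed (map_zero L') p
    have hd := hlip'.dist_le_mul u 0
    rwa [h0, dist_zero_right, dist_zero_right] at hd
  have hfixdist : dist zt y₀ ≤ dist zt (T zt) / (1 - K) := hcontr.dist_fixedPoint_le zt
  have hlam0 : (0:ℝ) ≤ ‖L'‖ := norm_nonneg _
  have hlam1 : ‖L'‖ < 1 := hnorm
  have hKr : (K : ℝ) = ‖L'‖ ^ p := by rw [hK]; push_cast; rfl
  have hKle : ‖L'‖ ^ p ≤ ‖L'‖ := pow_le_of_le_one hlam0 hlam1.le hp0'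
  have hcpos : (0:ℝ) < 1 - ‖L'‖ := by linarith
  have hKp1 : ‖L'‖ ^ p < 1 := lt_of_le_of_lt hKle hlam1
  have hstep : dist zt y₀ ≤ 2 * r / (1 - ‖L'‖) := by
    have ha : dist zt (T zt) ≤ ‖L'‖ ^ p * ‖u‖ := by
      rw [hdistT]; rw [hKr] at hLu; exact hLu
    have hb : ‖L'‖ ^ p * ‖u‖ ≤ 2 * r := by
      calc ‖L'‖ ^ p * ‖u‖ ≤ 1 * (2 * r) :=
            mul_le_mul hKp1.le hulen.le (norm_nonneg u) zero_le_one
        _ = 2 * r := one_mul _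
    calc dist zt y₀ ≤ dist zt (T zt) / (1 - K) := hfixdist
      _ ≤ (2 * r) / (1 - ‖L'‖) := by
          apply div_le_div₀ (by linarith) (ha.trans hb) hcpos
          rw [hKr]; linarith
  have h5 : dist (QuotientAddGroup.mk zt : Torus d) (QuotientAddGroup.mk y₀)
      ≤ dist zt y₀ := by
    rw [dist_eq_norm, ← QuotientAddGroup.mk_sub, dist_eq_norm]
    exact QuotientAddGroup.norm_mk_le_norm
  have hxz : dist x (QuotientAddGroup.mk zt : Torus d) < r := by
    rw [dist_comm]; exact mem_ball.mp hzball
  calc Metric.infDist x {y : Torus d | (toralMap A)^[p] y = y}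
      ≤ dist x (QuotientAddGroup.mk y₀) := Metric.infDist_le_dist_of_mem hper
    _ ≤ dist x (QuotientAddGroup.mk zt)
        + dist (QuotientAddGroup.mk zt : Torus d) (QuotientAddGroup.mk y₀) :=
          dist_triangle _ _ _
    _ ≤ r + 2 * r / (1 - ‖L'‖) := by
        have := h5.trans hstep
        linarith
    _ = (1 + 2 / c) * r := by
        rw [hc]
        ring


end
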